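/- Neither E_III nor E_IV is a compression space of rank 4: for each of these spaces E, there do not exist subspaces B' ⊆ ℂ^6 and C' ⊆ ℂ^6 with codim(B') + dim(C') ≤ 4 such that M(B') ⊆ C' for every M ∈ E. -/

import Mathlib

open Matrix

/-- Case (III) of the main theorem. -/
noncomputable def MIII (a : Fin 6 → ℂ) : Matrix (Fin 6) (Fin 6) ℂ :=
  !![a 0, 0, 0, 0, -a 2, -a 4;
     0, a 0, 0, 0, -a 3, -a 5;
     0, 0, a 0, 0, a 1, 0;
     0, 0, 0, a 0, 0, a 1;
     a 1, 0, a 2, a 4, 0, 0;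
     0, a 1, a 3, a 5, 0, 0]

/-- Case (IV) of the main theorem. -/
noncomputable def MIV (a : Fin 6 → ℂ) : Matrix (Fin 6) (Fin 6) ℂ :=
  !![a 0, a 1, 0, 0, -a 4, -a 5;
     0, a 0, 0, 0, 0, -a 4;
     0, 0, a 0, a 1, a 2, a 3;
     0, 0, 0, a 0, 0, a 2;
     a 2, a 3, a 4, a 5, 0, 0;
     0, a 2, 0, a 4, 0, 0]

namespace Stmt5Aux

open Module Submodule

set_option maxHeartbeats 1000000

lemma cval5 {α : Type*} (x : α) (u : Fin 5 → α) : Matrix.vecCons x u 5 = u 4 := rfl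
lemma cval4 {α : Type*} (x : α) (u : Fin 5 → α) : Matrix.vecCons x u 4 = u 3 := rfl

/-- standard basis vector -/
def eb (k : Fin 6) : Fin 6 → ℂ := fun j => if k = j then 1 else 0

lemma mulVecIII (a v : Fin 6 → ℂ) : (MIII a).mulVec v =
    ![a 0 * v 0 - a 2 * v 4 - a 4 * v 5,
      a 0 * v 1 - a 3 * v 4 - a 5 * v 5,
      a 0 * v 2 + a 1 * v 4,
      a 0 * v 3 + a 1 * v 5,
      a 1 * v 0 + a 2 * v 2 + a 4 * v 3,
      a 1 * v 1 + a 3 * v 2 + a 5 * v 3] := by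
  funext k
  fin_cases k <;>
    simp [MIII, Matrix.mulVec, dotProduct, Fin.sum_univ_six, cval5, cval4] <;> ring

lemma mulVecIV (a v : Fin 6 → ℂ) : (MIV a).mulVec v =
    ![a 0 * v 0 + a 1 * v 1 - a 4 * v 4 - a 5 * v 5,
      a 0 * v 1 - a 4 * v 5,
      a 0 * v 2 + a 1 * v 3 + a 2 * v 4 + a 3 * v 5,
      a 0 * v 3 + a 2 * v 5,
      a 2 * v 0 + a 3 * v 1 + a 4 * v 2 + a 5 * v 3,
      a 2 * v 1 + a 4 * v 3] := by
  funext k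
  fin_cases k <;>
    simp [MIV, Matrix.mulVec, dotProduct, Fin.sum_univ_six, cval5, cval4] <;> ring

/-! ### Specialised image formulas (type III) -/

lemma uIII0 (v : Fin 6 → ℂ) : (MIII ![1,0,0,0,0,0]).mulVec v = ![v 0, v 1, v 2, v 3, 0, 0] := by
  rw [mulVecIII]; funext k; fin_cases k <;> simp [cval4, cval5]
lemma uIII1 (v : Fin 6 → ℂ) : (MIII ![0,1,0,0,0,0]).mulVec v = ![0, 0, v 4, v 5, v 0, v 1] := by
  rw [mulVecIII]; funext k; fin_cases k <;> simp [cval4, cval5]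
lemma uIII2 (v : Fin 6 → ℂ) : (MIII ![0,0,1,0,0,0]).mulVec v = ![-v 4, 0, 0, 0, v 2, 0] := by
  rw [mulVecIII]; funext k; fin_cases k <;> simp [cval4, cval5]
lemma uIII3 (v : Fin 6 → ℂ) : (MIII ![0,0,0,1,0,0]).mulVec v = ![0, -v 4, 0, 0, 0, v 2] := by
  rw [mulVecIII]; funext k; fin_cases k <;> simp [cval4, cval5]
lemma uIII4 (v : Fin 6 → ℂ) : (MIII ![0,0,0,0,1,0]).mulVec v = ![-v 5, 0, 0, 0, v 3, 0] := by
  rw [mulVecIII]; funext k; fin_cases k <;> simp [cval4, cval5]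
lemma uIII5 (v : Fin 6 → ℂ) : (MIII ![0,0,0,0,0,1]).mulVec v = ![0, -v 5, 0, 0, 0, v 3] := by
  rw [mulVecIII]; funext k; fin_cases k <;> simp [cval4, cval5]

/-! ### Specialised image formulas (type IV) -/

lemma uIV0 (v : Fin 6 → ℂ) : (MIV ![1,0,0,0,0,0]).mulVec v = ![v 0, v 1, v 2, v 3, 0, 0] := by
  rw [mulVecIV]; funext k; fin_cases k <;> simp [cval4, cval5]
lemma uIV1 (v : Fin 6 → ℂ) : (MIV ![0,1,0,0,0,0]).mulVec v = ![v 1, 0, v 3, 0, 0, 0] := by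
  rw [mulVecIV]; funext k; fin_cases k <;> simp [cval4, cval5]
lemma uIV2 (v : Fin 6 → ℂ) : (MIV ![0,0,1,0,0,0]).mulVec v = ![0, 0, v 4, v 5, v 0, v 1] := by
  rw [mulVecIV]; funext k; fin_cases k <;> simp [cval4, cval5]
lemma uIV3 (v : Fin 6 → ℂ) : (MIV ![0,0,0,1,0,0]).mulVec v = ![0, 0, v 5, 0, v 1, 0] := by
  rw [mulVecIV]; funext k; fin_cases k <;> simp [cval4, cval5]
lemma uIV4 (v : Fin 6 → ℂ) : (MIV ![0,0,0,0,1,0]).mulVec v = ![-v 4, -v 5, 0, 0, v 2, v 3] := by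
  rw [mulVecIV]; funext k; fin_cases k <;> simp [cval4, cval5]
lemma uIV5 (v : Fin 6 → ℂ) : (MIV ![0,0,0,0,0,1]).mulVec v = ![-v 5, 0, 0, 0, v 3, 0] := by
  rw [mulVecIV]; funext k; fin_cases k <;> simp [cval4, cval5]

/-! ### Generic linear-algebra lemmas -/

lemma pair_smul {M : Type*} [AddCommGroup M] [Module ℂ M] [FiniteDimensional ℂ M]
    {C : Submodule ℂ M} (hC : finrank ℂ C ≤ 1) {u1 u2 : M}
    (h1 : u1 ∈ C) (h2 : u2 ∈ C) : ∃ (v : M) (a b : ℂ), u1 = a • v ∧ u2 = b • v := by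
  by_cases h : u1 = 0
  · exact ⟨u2, 0, 1, by simp [h], by simp⟩
  · have hsp : Submodule.span ℂ ({u1} : Set M) ≤ C := by
      simpa [Submodule.span_singleton_le_iff_mem] using h1
    have h1r : finrank ℂ (Submodule.span ℂ ({u1} : Set M)) = 1 := finrank_span_singleton h
    have heq : Submodule.span ℂ ({u1} : Set M) = C :=
      Submodule.eq_of_le_of_finrank_le hsp (by rw [h1r]; exact hC)
    have h2' : u2 ∈ Submodule.span ℂ ({u1} : Set M) := heq ▸ h2
    obtain ⟨b, hb⟩ := Submodule.mem_span_singleton.mp h2'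
    exact ⟨u1, 1, b, by simp, hb.symm⟩

lemma pair_mul {C : Submodule ℂ (Fin 6 → ℂ)} (hC : finrank ℂ C ≤ 1) {u1 u2 : Fin 6 → ℂ}
    (h1 : u1 ∈ C) (h2 : u2 ∈ C) (k l : Fin 6) : u1 k * u2 l = u1 l * u2 k := by
  obtain ⟨v, a, b, rfl, rfl⟩ := pair_smul hC h1 h2
  simp only [Pi.smul_apply, smul_eq_mul]; ring

lemma pair_mul_dual {W : Submodule ℂ (Module.Dual ℂ (Fin 6 → ℂ))} (hW : finrank ℂ W ≤ 1)
    {ψ1 ψ2 : Module.Dual ℂ (Fin 6 → ℂ)} (h1 : ψ1 ∈ W) (h2 : ψ2 ∈ W) (x y : Fin 6 → ℂ) :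
    ψ1 x * ψ2 y = ψ1 y * ψ2 x := by
  obtain ⟨v, a, b, rfl, rfl⟩ := pair_smul hW h1 h2
  simp only [LinearMap.smul_apply, smul_eq_mul]; ring

lemma triple_det {C : Submodule ℂ (Fin 6 → ℂ)} (hC : finrank ℂ C ≤ 2)
    {u1 u2 u3 : Fin 6 → ℂ} (h1 : u1 ∈ C) (h2 : u2 ∈ C) (h3 : u3 ∈ C) (k l m : Fin 6) :
    u1 k * u2 l * u3 m - u1 k * u2 m * u3 l - u1 l * u2 k * u3 m
      + u1 l * u2 m * u3 k + u1 m * u2 k * u3 l - u1 m * u2 l * u3 k = 0 := by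
  have hnli : ¬ LinearIndependent ℂ ![u1, u2, u3] := by
    intro hli
    have hsp : Submodule.span ℂ (Set.range ![u1, u2, u3]) ≤ C := by
      rw [Submodule.span_le]
      rintro x ⟨i, rfl⟩
      fin_cases i <;> assumption
    have hcard := finrank_span_eq_card hli
    have hle := Submodule.finrank_mono hsp
    rw [hcard] at hle
    simp only [Fintype.card_fin] at hle
    omega
  obtain ⟨g, hg0, i, hgi⟩ := Fintype.not_linearIndependent_iff.mp hnli
  have key : ∀ c : Fin 6, g 0 * u1 c + g 1 * u2 c + g 2 * u3 c = 0 := by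
    intro c
    have := congrFun hg0 c
    simpa [Fin.sum_univ_three] using this
  have hdet : (!![u1 k, u1 l, u1 m; u2 k, u2 l, u2 m; u3 k, u3 l, u3 m]
      : Matrix (Fin 3) (Fin 3) ℂ).det = 0 := by
    rw [← Matrix.exists_vecMul_eq_zero_iff]
    refine ⟨g, fun h => hgi (by rw [h]; rfl), ?_⟩
    funext j
    fin_cases j <;>
      simpa [Matrix.vecMul, dotProduct, Fin.sum_univ_three] using key _
  rw [Matrix.det_fin_three] at hdet
  simp at hdet ⊢
  linear_combination hdet

lemma phi_apply (φ : Module.Dual ℂ (Fin 6 → ℂ)) (u : Fin 6 → ℂ) :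
    φ u = u 0 * φ (eb 0) + u 1 * φ (eb 1) + u 2 * φ (eb 2) + u 3 * φ (eb 3)
      + u 4 * φ (eb 4) + u 5 * φ (eb 5) := by
  have := LinearMap.pi_apply_eq_sum_univ φ u
  rw [this, Fin.sum_univ_six]
  simp only [smul_eq_mul]
  rfl

/-! ### Specialised dual formulas (type III) -/

lemma psiIII0 (φ : Module.Dual ℂ (Fin 6 → ℂ)) (u : Fin 6 → ℂ) :
    φ ((MIII ![1,0,0,0,0,0]).mulVec u)
      = u 0 * φ (eb 0) + u 1 * φ (eb 1) + u 2 * φ (eb 2) + u 3 * φ (eb 3) := by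
  rw [uIII0, phi_apply]; simp [cval4, cval5]
lemma psiIII1 (φ : Module.Dual ℂ (Fin 6 → ℂ)) (u : Fin 6 → ℂ) :
    φ ((MIII ![0,1,0,0,0,0]).mulVec u)
      = u 4 * φ (eb 2) + u 5 * φ (eb 3) + u 0 * φ (eb 4) + u 1 * φ (eb 5) := by
  rw [uIII1, phi_apply]; simp [cval4, cval5]
lemma psiIII2 (φ : Module.Dual ℂ (Fin 6 → ℂ)) (u : Fin 6 → ℂ) :
    φ ((MIII ![0,0,1,0,0,0]).mulVec u) = -(u 4 * φ (eb 0)) + u 2 * φ (eb 4) := by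
  rw [uIII2, phi_apply]; simp [cval4, cval5]
lemma psiIII3 (φ : Module.Dual ℂ (Fin 6 → ℂ)) (u : Fin 6 → ℂ) :
    φ ((MIII ![0,0,0,1,0,0]).mulVec u) = -(u 4 * φ (eb 1)) + u 2 * φ (eb 5) := by
  rw [uIII3, phi_apply]; simp [cval4, cval5]
lemma psiIII4 (φ : Module.Dual ℂ (Fin 6 → ℂ)) (u : Fin 6 → ℂ) :
    φ ((MIII ![0,0,0,0,1,0]).mulVec u) = -(u 5 * φ (eb 0)) + u 3 * φ (eb 4) := by
  rw [uIII4, phi_apply]; simp [cval4, cval5]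
lemma psiIII5 (φ : Module.Dual ℂ (Fin 6 → ℂ)) (u : Fin 6 → ℂ) :
    φ ((MIII ![0,0,0,0,0,1]).mulVec u) = -(u 5 * φ (eb 1)) + u 3 * φ (eb 5) := by
  rw [uIII5, phi_apply]; simp [cval4, cval5]

/-! ### Specialised dual formulas (type IV) -/

lemma psiIV0 (φ : Module.Dual ℂ (Fin 6 → ℂ)) (u : Fin 6 → ℂ) :
    φ ((MIV ![1,0,0,0,0,0]).mulVec u)
      = u 0 * φ (eb 0) + u 1 * φ (eb 1) + u 2 * φ (eb 2) + u 3 * φ (eb 3) := by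
  rw [uIV0, phi_apply]; simp [cval4, cval5]
lemma psiIV1 (φ : Module.Dual ℂ (Fin 6 → ℂ)) (u : Fin 6 → ℂ) :
    φ ((MIV ![0,1,0,0,0,0]).mulVec u) = u 1 * φ (eb 0) + u 3 * φ (eb 2) := by
  rw [uIV1, phi_apply]; simp [cval4, cval5]
lemma psiIV2 (φ : Module.Dual ℂ (Fin 6 → ℂ)) (u : Fin 6 → ℂ) :
    φ ((MIV ![0,0,1,0,0,0]).mulVec u)
      = u 4 * φ (eb 2) + u 5 * φ (eb 3) + u 0 * φ (eb 4) + u 1 * φ (eb 5) := by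
  rw [uIV2, phi_apply]; simp [cval4, cval5]
lemma psiIV3 (φ : Module.Dual ℂ (Fin 6 → ℂ)) (u : Fin 6 → ℂ) :
    φ ((MIV ![0,0,0,1,0,0]).mulVec u) = u 5 * φ (eb 2) + u 1 * φ (eb 4) := by
  rw [uIV3, phi_apply]; simp [cval4, cval5]
lemma psiIV4 (φ : Module.Dual ℂ (Fin 6 → ℂ)) (u : Fin 6 → ℂ) :
    φ ((MIV ![0,0,0,0,1,0]).mulVec u)
      = -(u 4 * φ (eb 0)) - u 5 * φ (eb 1) + u 2 * φ (eb 4) + u 3 * φ (eb 5) := by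
  rw [uIV4, phi_apply]; simp [cval4, cval5]; ring
lemma psiIV5 (φ : Module.Dual ℂ (Fin 6 → ℂ)) (u : Fin 6 → ℂ) :
    φ ((MIV ![0,0,0,0,0,1]).mulVec u) = -(u 5 * φ (eb 0)) + u 3 * φ (eb 4) := by
  rw [uIV5, phi_apply]; simp [cval4, cval5]

lemma vec_eq_two {v : Fin 6 → ℂ} (h2 : v 2 = 0) (h3 : v 3 = 0) (h4 : v 4 = 0) (h5 : v 5 = 0) :
    v = v 0 • eb 0 + v 1 • eb 1 := by
  funext j
  fin_cases j <;> simp [eb] <;> assumption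

lemma vec_eq_three {v : Fin 6 → ℂ} (h1 : v 1 = 0) (h3 : v 3 = 0) (h5 : v 5 = 0) :
    v = v 0 • eb 0 + v 2 • eb 2 + v 4 • eb 4 := by
  funext j
  fin_cases j <;> simp [eb] <;> assumption

lemma finrank_fun6 : finrank ℂ (Fin 6 → ℂ) = 6 := by simp

lemma dims {B C : Submodule ℂ (Fin 6 → ℂ)}
    (hle : (6 - finrank ℂ B) + finrank ℂ C ≤ 4) :
    finrank ℂ B ≤ 6 ∧ 2 ≤ finrank ℂ B ∧ finrank ℂ C ≤ finrank ℂ B - 2 := by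
  have hd6 : finrank ℂ B ≤ 6 := by
    have := Submodule.finrank_le B
    rwa [finrank_fun6] at this
  exact ⟨hd6, by omega, by omega⟩


theorem notIII : ¬ ∃ (B' C' : Submodule ℂ (Fin 6 → ℂ)),
    (6 - Module.finrank ℂ B') + Module.finrank ℂ C' ≤ 4 ∧
    ∀ a : Fin 6 → ℂ, B'.map (MIII a).mulVecLin ≤ C' := by
  rintro ⟨B, C, hle, hmap⟩
  obtain ⟨hd6, hd2, hcd⟩ := dims hle
  have himg : ∀ (a v : Fin 6 → ℂ), v ∈ B → (MIII a).mulVec v ∈ C := by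
    intro a v hv
    have h1 : (MIII a).mulVecLin v ∈ B.map (MIII a).mulVecLin :=
      Submodule.mem_map_of_mem hv
    have h2 := hmap a h1
    rwa [Matrix.mulVecLin_apply] at h2
  rcases Nat.lt_or_ge (finrank ℂ B) 5 with h5 | h5
  · rcases Nat.lt_or_ge (finrank ℂ C) 2 with hc | hc
    · -- dim C ≤ 1 : every element of B is zero
      have hC1 : finrank ℂ C ≤ 1 := by omega
      have hzero : ∀ v ∈ B, v = (0 : Fin 6 → ℂ) := by
        intro v hv
        have hv4 : v 4 = 0 := by
          have m := pair_mul hC1 (himg ![0,0,1,0,0,0] v hv) (himg ![0,0,0,1,0,0] v hv) 0 1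
          rw [uIII2, uIII3] at m
          simp [cval4, cval5] at m
          exact m
        have hv5 : v 5 = 0 := by
          have m := pair_mul hC1 (himg ![0,0,0,0,1,0] v hv) (himg ![0,0,0,0,0,1] v hv) 0 1
          rw [uIII4, uIII5] at m
          simp [cval4, cval5] at m
          exact m
        have hv2 : v 2 = 0 := by
          have m := pair_mul hC1 (himg ![0,0,1,0,0,0] v hv) (himg ![0,0,0,1,0,0] v hv) 4 5
          rw [uIII2, uIII3] at m
          simp [cval4, cval5] at m
          exact m
        have hv3 : v 3 = 0 := by
          have m := pair_mul hC1 (himg ![0,0,0,0,1,0] v hv) (himg ![0,0,0,0,0,1] v hv) 4 5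
          rw [uIII4, uIII5] at m
          simp [cval4, cval5] at m
          exact m
        have hv0 : v 0 = 0 := by
          have m := pair_mul hC1 (himg ![1,0,0,0,0,0] v hv) (himg ![0,1,0,0,0,0] v hv) 0 4
          rw [uIII0, uIII1] at m
          simp [cval4, cval5] at m
          exact m
        have hv1 : v 1 = 0 := by
          have m := pair_mul hC1 (himg ![1,0,0,0,0,0] v hv) (himg ![0,1,0,0,0,0] v hv) 1 5
          rw [uIII0, uIII1] at m
          simp [cval4, cval5] at m
          exact m
        funext j
        fin_cases j <;> assumption
      have hbot : B = ⊥ := by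
        rw [Submodule.eq_bot_iff]
        exact hzero
      rw [hbot, finrank_bot] at hd2
      omega
    · -- dim C = 2, dim B = 4
      have hC2 : finrank ℂ C ≤ 2 := by omega
      have hzero : ∀ v ∈ B, v 2 = 0 ∧ v 3 = 0 ∧ v 4 = 0 ∧ v 5 = 0 := by
        intro v hv
        have hv4 : v 4 = 0 := by
          have m := triple_det hC2 (himg ![0,1,0,0,0,0] v hv) (himg ![0,0,1,0,0,0] v hv)
            (himg ![0,0,0,1,0,0] v hv) 0 1 2
          rw [uIII1, uIII2, uIII3] at m
          simp [cval4, cval5] at m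
          exact m
        have hv5 : v 5 = 0 := by
          have m := triple_det hC2 (himg ![0,1,0,0,0,0] v hv) (himg ![0,0,0,0,1,0] v hv)
            (himg ![0,0,0,0,0,1] v hv) 0 1 3
          rw [uIII1, uIII4, uIII5] at m
          simp [cval4, cval5] at m
          exact m
        have hv2 : v 2 = 0 := by
          have m := triple_det hC2 (himg ![1,0,0,0,0,0] v hv) (himg ![0,0,1,0,0,0] v hv)
            (himg ![0,0,0,1,0,0] v hv) 2 4 5
          rw [uIII0, uIII2, uIII3] at m
          simp [cval4, cval5] at m
          exact m
        have hv3 : v 3 = 0 := by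
          have m := triple_det hC2 (himg ![1,0,0,0,0,0] v hv) (himg ![0,0,0,0,1,0] v hv)
            (himg ![0,0,0,0,0,1] v hv) 3 4 5
          rw [uIII0, uIII4, uIII5] at m
          simp [cval4, cval5] at m
          exact m
        exact ⟨hv2, hv3, hv4, hv5⟩
      have hsub : B ≤ Submodule.span ℂ (Set.range ![eb 0, eb 1]) := by
        intro v hv
        obtain ⟨h2, h3, h4, h5⟩ := hzero v hv
        rw [vec_eq_two h2 h3 h4 h5]
        exact Submodule.add_mem _
          (Submodule.smul_mem _ _ (Submodule.subset_span ⟨0, rfl⟩))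
          (Submodule.smul_mem _ _ (Submodule.subset_span ⟨1, rfl⟩))
      have hfle := Submodule.finrank_mono hsub
      have hsp := finrank_range_le_card (R := ℂ) ![eb 0, eb 1]
      rw [Set.finrank] at hsp
      simp only [Fintype.card_fin] at hsp
      omega
  · -- dim B ≥ 5 : dual argument
    have hCne : C ≠ ⊤ := by
      intro h
      rw [h, finrank_top, finrank_fun6] at hcd
      omega
    obtain ⟨φ, hφne, hφbot⟩ :=
      Submodule.exists_dual_map_eq_bot_of_lt_top (lt_top_iff_ne_top.mpr hCne) inferInstance
    have hφC : ∀ u ∈ C, φ u = 0 := by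
      intro u hu
      have h1 : φ u ∈ C.map φ := Submodule.mem_map_of_mem hu
      rw [hφbot] at h1
      simpa using h1
    have hWr : finrank ℂ (Submodule.dualAnnihilator B) ≤ 1 := by
      have h1 := (Subspace.quotEquivAnnihilator B).finrank_eq
      have h2 := Submodule.finrank_quotient_add_finrank B
      rw [finrank_fun6] at h2
      omega
    have hψ : ∀ a : Fin 6 → ℂ, φ ∘ₗ (MIII a).mulVecLin ∈ Submodule.dualAnnihilator B := by
      intro a
      rw [Submodule.mem_dualAnnihilator]
      intro v hv
      have : φ ((MIII a).mulVec v) = 0 := hφC _ (himg a v hv)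
      simpa using this
    have hw4 : φ (eb 4) = 0 := by
      have m := pair_mul_dual hWr (hψ ![0,0,1,0,0,0]) (hψ ![0,0,0,0,1,0])
        (![0,0,1,0,0,0]) (![0,0,0,1,0,0])
      simp only [LinearMap.comp_apply, Matrix.mulVecLin_apply, psiIII2, psiIII4] at m
      simp [cval4, cval5] at m
      exact m
    have hw5 : φ (eb 5) = 0 := by
      have m := pair_mul_dual hWr (hψ ![0,0,0,1,0,0]) (hψ ![0,0,0,0,0,1])
        (![0,0,1,0,0,0]) (![0,0,0,1,0,0])
      simp only [LinearMap.comp_apply, Matrix.mulVecLin_apply, psiIII3, psiIII5] at m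
      simp [cval4, cval5] at m
      exact m
    have hw0 : φ (eb 0) = 0 := by
      have m := pair_mul_dual hWr (hψ ![0,0,1,0,0,0]) (hψ ![0,0,0,0,1,0])
        (![0,0,0,0,1,0]) (![0,0,0,0,0,1])
      simp only [LinearMap.comp_apply, Matrix.mulVecLin_apply, psiIII2, psiIII4] at m
      simp [cval4, cval5] at m
      exact m
    have hw1 : φ (eb 1) = 0 := by
      have m := pair_mul_dual hWr (hψ ![0,0,0,1,0,0]) (hψ ![0,0,0,0,0,1])
        (![0,0,0,0,1,0]) (![0,0,0,0,0,1])
      simp only [LinearMap.comp_apply, Matrix.mulVecLin_apply, psiIII3, psiIII5] at m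
      simp [cval4, cval5] at m
      exact m
    have hw2 : φ (eb 2) = 0 := by
      have m := pair_mul_dual hWr (hψ ![1,0,0,0,0,0]) (hψ ![0,1,0,0,0,0])
        (![0,0,1,0,0,0]) (![0,0,0,0,1,0])
      simp only [LinearMap.comp_apply, Matrix.mulVecLin_apply, psiIII0, psiIII1] at m
      simp [cval4, cval5] at m
      exact m
    have hw3 : φ (eb 3) = 0 := by
      have m := pair_mul_dual hWr (hψ ![1,0,0,0,0,0]) (hψ ![0,1,0,0,0,0])
        (![0,0,0,1,0,0]) (![0,0,0,0,0,1])
      simp only [LinearMap.comp_apply, Matrix.mulVecLin_apply, psiIII0, psiIII1] at m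
      simp [cval4, cval5] at m
      exact m
    apply hφne
    apply LinearMap.ext
    intro u
    rw [phi_apply, hw0, hw1, hw2, hw3, hw4, hw5]
    simp


theorem notIV : ¬ ∃ (B' C' : Submodule ℂ (Fin 6 → ℂ)),
    (6 - Module.finrank ℂ B') + Module.finrank ℂ C' ≤ 4 ∧
    ∀ a : Fin 6 → ℂ, B'.map (MIV a).mulVecLin ≤ C' := by
  rintro ⟨B, C, hle, hmap⟩
  obtain ⟨hd6, hd2, hcd⟩ := dims hle
  have himg : ∀ (a v : Fin 6 → ℂ), v ∈ B → (MIV a).mulVec v ∈ C := by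
    intro a v hv
    have h1 : (MIV a).mulVecLin v ∈ B.map (MIV a).mulVecLin :=
      Submodule.mem_map_of_mem hv
    have h2 := hmap a h1
    rwa [Matrix.mulVecLin_apply] at h2
  rcases Nat.lt_or_ge (finrank ℂ B) 5 with h5 | h5
  · rcases Nat.lt_or_ge (finrank ℂ C) 2 with hc | hc
    · -- dim C ≤ 1 : every element of B is zero
      have hC1 : finrank ℂ C ≤ 1 := by omega
      have hzero : ∀ v ∈ B, v = (0 : Fin 6 → ℂ) := by
        intro v hv
        have hv1 : v 1 = 0 := by
          have m := pair_mul hC1 (himg ![0,1,0,0,0,0] v hv) (himg ![0,0,0,1,0,0] v hv) 0 4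
          rw [uIV1, uIV3] at m
          simp [cval4, cval5] at m
          exact m
        have hv3 : v 3 = 0 := by
          have m := pair_mul hC1 (himg ![0,1,0,0,0,0] v hv) (himg ![0,0,0,0,0,1] v hv) 2 4
          rw [uIV1, uIV5] at m
          simp [cval4, cval5] at m
          exact m
        have hv5 : v 5 = 0 := by
          have m := pair_mul hC1 (himg ![0,0,0,1,0,0] v hv) (himg ![0,0,0,0,0,1] v hv) 2 0
          rw [uIV3, uIV5] at m
          simp [cval4, cval5] at m
          exact m
        have hv0 : v 0 = 0 := by
          have m := pair_mul hC1 (himg ![1,0,0,0,0,0] v hv) (himg ![0,0,1,0,0,0] v hv) 0 4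
          rw [uIV0, uIV2] at m
          simp [cval4, cval5] at m
          exact m
        have hv2 : v 2 = 0 := by
          have m := pair_mul hC1 (himg ![1,0,0,0,0,0] v hv) (himg ![0,0,0,0,1,0] v hv) 2 4
          rw [uIV0, uIV4] at m
          simp [cval4, cval5] at m
          exact m
        have hv4 : v 4 = 0 := by
          have m := pair_mul hC1 (himg ![0,0,1,0,0,0] v hv) (himg ![0,0,0,0,1,0] v hv) 2 0
          rw [uIV2, uIV4] at m
          simp [cval4, cval5] at m
          exact m
        funext j
        fin_cases j <;> assumption
      have hbot : B = ⊥ := by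
        rw [Submodule.eq_bot_iff]
        exact hzero
      rw [hbot, finrank_bot] at hd2
      omega
    · -- dim C = 2, dim B = 4
      have hC2 : finrank ℂ C ≤ 2 := by omega
      have hzero : ∀ v ∈ B, v 1 = 0 ∧ v 3 = 0 ∧ v 5 = 0 := by
        intro v hv
        have hv1 : v 1 = 0 := by
          have m := triple_det hC2 (himg ![0,1,0,0,0,0] v hv) (himg ![0,0,0,1,0,0] v hv)
            (himg ![0,0,1,0,0,0] v hv) 0 4 5
          rw [uIV1, uIV2, uIV3] at m
          simp [cval4, cval5] at m
          exact m
        have hv5 : v 5 = 0 := by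
          have m := triple_det hC2 (himg ![0,0,0,1,0,0] v hv) (himg ![0,0,0,0,0,1] v hv)
            (himg ![0,0,1,0,0,0] v hv) 0 2 3
          rw [uIV2, uIV3, uIV5] at m
          simp [cval4, cval5] at m
          exact m
        have hv3 : v 3 = 0 := by
          have m := triple_det hC2 (himg ![0,1,0,0,0,0] v hv) (himg ![0,0,0,0,0,1] v hv)
            (himg ![0,0,0,0,1,0] v hv) 2 4 5
          rw [uIV1, uIV4, uIV5] at m
          simp [cval4, cval5] at m
          exact m
        exact ⟨hv1, hv3, hv5⟩
      have hsub : B ≤ Submodule.span ℂ (Set.range ![eb 0, eb 2, eb 4]) := by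
        intro v hv
        obtain ⟨h1, h3, h5⟩ := hzero v hv
        rw [vec_eq_three h1 h3 h5]
        exact Submodule.add_mem _
          (Submodule.add_mem _
            (Submodule.smul_mem _ _ (Submodule.subset_span ⟨0, rfl⟩))
            (Submodule.smul_mem _ _ (Submodule.subset_span ⟨1, rfl⟩)))
          (Submodule.smul_mem _ _ (Submodule.subset_span ⟨2, rfl⟩))
      have hfle := Submodule.finrank_mono hsub
      have hsp := finrank_range_le_card (R := ℂ) ![eb 0, eb 2, eb 4]
      rw [Set.finrank] at hsp
      simp only [Fintype.card_fin] at hsp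
      omega
  · -- dim B ≥ 5 : dual argument
    have hCne : C ≠ ⊤ := by
      intro h
      rw [h, finrank_top, finrank_fun6] at hcd
      omega
    obtain ⟨φ, hφne, hφbot⟩ :=
      Submodule.exists_dual_map_eq_bot_of_lt_top (lt_top_iff_ne_top.mpr hCne) inferInstance
    have hφC : ∀ u ∈ C, φ u = 0 := by
      intro u hu
      have h1 : φ u ∈ C.map φ := Submodule.mem_map_of_mem hu
      rw [hφbot] at h1
      simpa using h1
    have hWr : finrank ℂ (Submodule.dualAnnihilator B) ≤ 1 := by
      have h1 := (Subspace.quotEquivAnnihilator B).finrank_eq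
      have h2 := Submodule.finrank_quotient_add_finrank B
      rw [finrank_fun6] at h2
      omega
    have hψ : ∀ a : Fin 6 → ℂ, φ ∘ₗ (MIV a).mulVecLin ∈ Submodule.dualAnnihilator B := by
      intro a
      rw [Submodule.mem_dualAnnihilator]
      intro v hv
      have : φ ((MIV a).mulVec v) = 0 := hφC _ (himg a v hv)
      simpa using this
    have hw4 : φ (eb 4) = 0 := by
      have m := pair_mul_dual hWr (hψ ![0,0,0,1,0,0]) (hψ ![0,0,0,0,0,1])
        (![0,1,0,0,0,0]) (![0,0,0,1,0,0])
      simp only [LinearMap.comp_apply, Matrix.mulVecLin_apply, psiIV3, psiIV5] at m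
      simp [cval4, cval5] at m
      exact m
    have hw0 : φ (eb 0) = 0 := by
      have m := pair_mul_dual hWr (hψ ![0,1,0,0,0,0]) (hψ ![0,0,0,0,0,1])
        (![0,1,0,0,0,0]) (![0,0,0,0,0,1])
      simp only [LinearMap.comp_apply, Matrix.mulVecLin_apply, psiIV1, psiIV5] at m
      simp [cval4, cval5] at m
      exact m
    have hw2 : φ (eb 2) = 0 := by
      have m := pair_mul_dual hWr (hψ ![0,1,0,0,0,0]) (hψ ![0,0,0,1,0,0])
        (![0,0,0,1,0,0]) (![0,0,0,0,0,1])
      simp only [LinearMap.comp_apply, Matrix.mulVecLin_apply, psiIV1, psiIV3] at m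
      simp [cval4, cval5] at m
      exact m
    have hw3 : φ (eb 3) = 0 := by
      have m := pair_mul_dual hWr (hψ ![1,0,0,0,0,0]) (hψ ![0,0,1,0,0,0])
        (![0,0,0,1,0,0]) (![0,0,0,0,0,1])
      simp only [LinearMap.comp_apply, Matrix.mulVecLin_apply, psiIV0, psiIV2] at m
      simp [cval4, cval5] at m
      exact m
    have hw1 : φ (eb 1) = 0 := by
      have m := pair_mul_dual hWr (hψ ![1,0,0,0,0,0]) (hψ ![0,0,0,0,1,0])
        (![0,1,0,0,0,0]) (![0,0,0,0,0,1])
      simp only [LinearMap.comp_apply, Matrix.mulVecLin_apply, psiIV0, psiIV4] at m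
      simp [cval4, cval5] at m
      exact m
    have hw5 : φ (eb 5) = 0 := by
      have m := pair_mul_dual hWr (hψ ![0,0,1,0,0,0]) (hψ ![0,0,0,0,1,0])
        (![0,1,0,0,0,0]) (![0,0,0,1,0,0])
      simp only [LinearMap.comp_apply, Matrix.mulVecLin_apply, psiIV2, psiIV4] at m
      simp [cval4, cval5] at m
      exact m
    apply hφne
    apply LinearMap.ext
    intro u
    rw [phi_apply, hw0, hw1, hw2, hw3, hw4, hw5]
    simp

end Stmt5Aux

/-- Neither `E_III` nor `E_IV` is a compression space of rank `4`: there are no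
subspaces `B', C' ⊆ ℂ^6` with `codim B' + dim C' ≤ 4` such that every matrix of
the space maps `B'` into `C'`. -/
theorem stmt5 :
    (¬ ∃ (B' C' : Submodule ℂ (Fin 6 → ℂ)),
      (6 - Module.finrank ℂ B') + Module.finrank ℂ C' ≤ 4 ∧
      ∀ a : Fin 6 → ℂ, B'.map (MIII a).mulVecLin ≤ C') ∧
    (¬ ∃ (B' C' : Submodule ℂ (Fin 6 → ℂ)),
      (6 - Module.finrank ℂ B') + Module.finrank ℂ C' ≤ 4 ∧
      ∀ a : Fin 6 → ℂ, B'.map (MIV a).mulVecLin ≤ C') :=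
  ⟨Stmt5Aux.notIII, Stmt5Aux.notIV⟩
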